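/- Let k, l ≥ 1, p ≥ 6, and φ(s) = 1 - l/(p(k+l)) + (l/(p(k+l)))s^p. Define L(s) = [(p-1)((k+l+1)/2 - s) + ks](1-s) and R(s) = ((k+l-1)(k+l - l/p)/(k+l+1))(s^{2-p} - s^2). Then R'(1) < L'(1). -/

import Mathlib

theorem stmt_9 (k l : ℕ) (hk : 1 ≤ k) (hl : 1 ≤ l) (p : ℝ) (hp : 6 ≤ p)
    (L R : ℝ → ℝ)
    (hL : ∀ s : ℝ, L s = ((p - 1) * ((k + l + 1 : ℝ) / 2 - s) + k * s) * (1 - s))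
    (hR : ∀ s : ℝ, 0 < s →
      R s = ((k + l - 1 : ℝ) * ((k : ℝ) + l - l / p) / (k + l + 1)) * (s ^ (2 - p) - s ^ 2)) :
    deriv R 1 < deriv L 1 := by
  set C : ℝ := (k + l - 1 : ℝ) * ((k : ℝ) + l - l / p) / (k + l + 1) with hC
  -- derivative of L at 1
  have h1 : HasDerivAt (fun s : ℝ => (p - 1) * ((k + l + 1 : ℝ) / 2 - s) + k * s)
      ((p - 1) * (-1) + k * 1) 1 := by
    have ha : HasDerivAt (fun s : ℝ => (k + l + 1 : ℝ) / 2 - s) (-1) 1 :=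
      (hasDerivAt_id 1).const_sub _
    have hb : HasDerivAt (fun s : ℝ => (k : ℝ) * s) ((k : ℝ) * 1) 1 :=
      (hasDerivAt_id 1).const_mul _
    exact (ha.const_mul (p - 1)).add hb
  have h2 : HasDerivAt (fun s : ℝ => 1 - s) (-1) 1 := (hasDerivAt_id 1).const_sub 1
  have hLfun : L = fun s : ℝ => ((p - 1) * ((k + l + 1 : ℝ) / 2 - s) + k * s) * (1 - s) :=
    funext hL
  have hLd : deriv L 1 = -((p - 1) * ((k + l - 1 : ℝ) / 2) + k) := by
    rw [hLfun]
    have h3 : HasDerivAt (fun s : ℝ => ((p - 1) * ((k + l + 1 : ℝ) / 2 - s) + k * s) * (1 - s)) (((p - 1) * -1 + k * 1) * (1 - 1) + ((p - 1) * ((k + l + 1 : ℝ) / 2 - 1) + k * 1) * -1) 1 := h1.mul h2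
    have := h3.deriv
    rw [this]
    ring
  -- derivative of R at 1
  have hfd : HasDerivAt (fun s : ℝ => C * (s ^ (2 - p) - s ^ 2)) (C * ((2 - p) - 2)) 1 := by
    have ha : HasDerivAt (fun s : ℝ => s ^ (2 - p)) ((2 - p) * (1 : ℝ) ^ (2 - p - 1)) 1 :=
      Real.hasDerivAt_rpow_const (Or.inl one_ne_zero)
    have hb : HasDerivAt (fun s : ℝ => s ^ 2) ((2 : ℕ) * (1 : ℝ) ^ (2 - 1)) 1 :=
      hasDerivAt_pow 2 1
    have := ((ha.sub hb).const_mul C)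
    simpa using this
  have hRd : deriv R 1 = C * ((2 - p) - 2) := by
    have heq : R =ᶠ[nhds (1 : ℝ)] fun s : ℝ => C * (s ^ (2 - p) - s ^ 2) := by
      filter_upwards [eventually_gt_nhds (show (0 : ℝ) < 1 by norm_num)] with s hs
      exact hR s hs
    rw [Filter.EventuallyEq.deriv_eq heq, hfd.deriv]
  rw [hLd, hRd]
  have hk1 : (1 : ℝ) ≤ (k : ℝ) := by exact_mod_cast hk
  have hl1 : (1 : ℝ) ≤ (l : ℝ) := by exact_mod_cast hl
  have hp0 : (0 : ℝ) < p := by linarith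
  have hKL : (0 : ℝ) < (k : ℝ) + l + 1 := by linarith
  rw [hC, div_mul_eq_mul_div, div_lt_iff₀ hKL]
  have key : ((k : ℝ) + l - l / p) * p = ((k : ℝ) + l) * p - l := by
    field_simp
  nlinarith [mul_pos (sub_pos.mpr (show (1:ℝ) < p by linarith)) hp0,
    mul_nonneg (sub_nonneg.mpr hk1) (sub_nonneg.mpr hl1),
    sq_nonneg ((k:ℝ) + l - 2), sq_nonneg ((k:ℝ) - l),
    mul_le_mul_of_nonneg_left (show (6:ℝ) ≤ p from hp) (by linarith : (0:ℝ) ≤ (k:ℝ)+l-1),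
    mul_nonneg (mul_nonneg (by linarith : (0:ℝ) ≤ (k:ℝ)+l-2) (by linarith : (0:ℝ) ≤ (k:ℝ)+l-1)) (by linarith : (0:ℝ) ≤ p-1)]
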